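/- arXiv:0902.0337 — 5 statements merged into one kernel-verified Lean document; each statement's English description precedes it below -/
import Mathlib

section
/- If the arrival-rate region is defined as A(μ) = {λ ∈ ℝ_+^L : λ ⪯ μ} (componentwise inequality) for a departure-rate vector μ that is a convex combination ∑ p_ℓ r_ℓ of nonnegative vectors r_ℓ including the zero vector, then the union of A(∑ p_ℓ r_ℓ) over all probability vectors p equals the convex hull of the r_ℓ. (Downward closure coincides with the convex hull when 0 is among the generators and each r_ℓ is of the form d·v with v ∈ {0,1}^L covering all coordinate patterns.) -/
open Finset

/-- The 0-1 indicator vector of a boolean vector `v ∈ {0,1}^L`. -/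
def ind {L : ℕ} (v : Fin L → Bool) : Fin L → ℝ := fun ℓ => if v ℓ then 1 else 0

/-- The number of ones `‖v‖₁` of `v ∈ {0,1}^L`. -/
def cnt {L : ℕ} (v : Fin L → Bool) : ℕ := (Finset.univ.filter (fun ℓ => v ℓ = true)).card

lemma ind_nonneg {L : ℕ} (v : Fin L → Bool) (ℓ : Fin L) : 0 ≤ ind v ℓ := by
  unfold ind; split <;> norm_num

lemma ind_le_one {L : ℕ} (v : Fin L → Bool) (ℓ : Fin L) : ind v ℓ ≤ 1 := by
  unfold ind; split <;> norm_num

/-- The product measure decomposition of a point of the cube `[0,1]^L` as a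
convex combination of 0-1 vectors. -/
lemma cube {L : ℕ} (y : Fin L → ℝ) (h0 : ∀ ℓ, 0 ≤ y ℓ) (h1 : ∀ ℓ, y ℓ ≤ 1) :
    ∃ q : (Fin L → Bool) → ℝ, (∀ w, 0 ≤ q w) ∧ (∑ w, q w) = 1 ∧
      (∀ ℓ, (∑ w, q w * ind w ℓ) = y ℓ) ∧
      (∀ w, q w ≠ 0 → ∀ ℓ, w ℓ = true → y ℓ ≠ 0) := by
  set g : Fin L → Bool → ℝ := fun ℓ b => if b then y ℓ else 1 - y ℓ with hg
  refine ⟨fun w => ∏ ℓ, g ℓ (w ℓ), ?_, ?_, ?_, ?_⟩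
  · intro w
    apply Finset.prod_nonneg
    intro ℓ _
    by_cases h : w ℓ <;> simp [hg, h, h0 ℓ, h1 ℓ]
  · rw [← Fintype.prod_sum g]
    apply Finset.prod_eq_one
    intro ℓ _
    simp [hg]
  · intro ℓ0
    set g' : Fin L → Bool → ℝ := fun ℓ b =>
      if ℓ = ℓ0 then (if b then y ℓ else 0) else g ℓ b with hg'
    have key : ∀ w : Fin L → Bool,
        (∏ ℓ, g ℓ (w ℓ)) * ind w ℓ0 = ∏ ℓ, g' ℓ (w ℓ) := by
      intro w
      rw [← Finset.mul_prod_erase univ (fun ℓ => g ℓ (w ℓ)) (mem_univ ℓ0),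
        ← Finset.mul_prod_erase univ (fun ℓ => g' ℓ (w ℓ)) (mem_univ ℓ0)]
      have heq : ∏ ℓ ∈ univ.erase ℓ0, g ℓ (w ℓ) = ∏ ℓ ∈ univ.erase ℓ0, g' ℓ (w ℓ) := by
        apply Finset.prod_congr rfl
        intro ℓ hℓ
        have hne : ℓ ≠ ℓ0 := (Finset.mem_erase.mp hℓ).1
        simp [hg', hne]
      rw [← heq]
      by_cases h : w ℓ0 <;> simp [hg, hg', ind, h]
    calc (∑ w, (∏ ℓ, g ℓ (w ℓ)) * ind w ℓ0) = ∑ w : Fin L → Bool, ∏ ℓ, g' ℓ (w ℓ) := by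
          exact Finset.sum_congr rfl fun w _ => key w
      _ = ∏ ℓ, (∑ b : Bool, g' ℓ b) := (Fintype.prod_sum g').symm
      _ = y ℓ0 := by
          rw [Finset.prod_eq_single ℓ0]
          · simp [hg']
          · intro ℓ _ hne; simp [hg', hg, hne]
          · simp
  · intro w hw ℓ hl hy
    exact hw (Finset.prod_eq_zero (mem_univ ℓ) (by simp [hg, hl, hy]))

/-- Any point of the box `[0, d(cnt v) • ind v]` lies in the convex hull. -/
lemma box_mem {L : ℕ} (d : ℕ → ℝ) (hd_pos : ∀ k, 0 < d k)
    (hd_mono : ∀ j k, j ≤ k → d k ≤ d j) (v : Fin L → Bool) (x : Fin L → ℝ)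
    (hx0 : ∀ ℓ, 0 ≤ x ℓ) (hxle : ∀ ℓ, x ℓ ≤ d (cnt v) * ind v ℓ) :
    x ∈ convexHull ℝ {x : Fin L → ℝ | ∃ v : Fin L → Bool, x = d (cnt v) • ind v} := by
  set S := {x : Fin L → ℝ | ∃ v : Fin L → Bool, x = d (cnt v) • ind v} with hS
  set c := d (cnt v) with hc
  have hcpos : 0 < c := hd_pos _
  set y : Fin L → ℝ := fun ℓ => x ℓ / c with hy
  have hy0 : ∀ ℓ, 0 ≤ y ℓ := fun ℓ => div_nonneg (hx0 ℓ) hcpos.le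
  have hy1 : ∀ ℓ, y ℓ ≤ 1 := by
    intro ℓ
    rw [hy, div_le_one hcpos]
    calc x ℓ ≤ c * ind v ℓ := hxle ℓ
      _ ≤ c * 1 := by nlinarith [ind_le_one v ℓ]
      _ = c := mul_one c
  obtain ⟨q, hq0, hq1, hqm, hqsupp⟩ := cube y hy0 hy1
  have hyv : ∀ ℓ, v ℓ = false → y ℓ = 0 := by
    intro ℓ hvℓ
    have : x ℓ ≤ 0 := by have := hxle ℓ; simp [ind, hvℓ] at this; linarith
    have : x ℓ = 0 := le_antisymm this (hx0 ℓ)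
    simp [hy, this]
  have hcnt : ∀ w : Fin L → Bool, q w ≠ 0 → cnt w ≤ cnt v := by
    intro w hw
    apply Finset.card_le_card
    intro ℓ hℓ
    simp only [Finset.mem_filter, Finset.mem_univ, true_and] at hℓ ⊢
    by_contra hv
    exact hqsupp w hw ℓ hℓ (hyv ℓ (by simpa using hv))
  have hzero : (0 : Fin L → ℝ) ∈ S := by
    refine ⟨fun _ => false, ?_⟩
    funext ℓ; simp [ind]
  have hz : ∀ w : Fin L → Bool, q w ≠ 0 →
      (c • ind w : Fin L → ℝ) ∈ convexHull ℝ S := by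
    intro w hw
    have hdw : 0 < d (cnt w) := hd_pos _
    set a := c / d (cnt w) with ha
    have ha0 : 0 ≤ a := div_nonneg hcpos.le hdw.le
    have ha1 : a ≤ 1 := by
      rw [ha, div_le_one hdw]
      exact hd_mono _ _ (hcnt w hw)
    have hmem1 : (d (cnt w) • ind w : Fin L → ℝ) ∈ convexHull ℝ S :=
      subset_convexHull ℝ S ⟨w, rfl⟩
    have hmem0 : (0 : Fin L → ℝ) ∈ convexHull ℝ S := subset_convexHull ℝ S hzero
    have hzcomb : (c • ind w : Fin L → ℝ)
        = a • (d (cnt w) • ind w) + (1 - a) • (0 : Fin L → ℝ) := by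
      funext ℓ
      simp only [Pi.add_apply, Pi.smul_apply, smul_eq_mul, Pi.zero_apply, mul_zero, add_zero]
      rw [ha, ← mul_assoc, div_mul_cancel₀ _ (ne_of_gt hdw)]
    rw [hzcomb]
    exact (convex_convexHull ℝ S) hmem1 hmem0 ha0 (by linarith) (by ring)
  have hxsum : x = ∑ w : Fin L → Bool, q w • (c • ind w : Fin L → ℝ) := by
    funext ℓ
    rw [Finset.sum_apply]
    simp only [Pi.smul_apply, smul_eq_mul]
    have : ∑ w : Fin L → Bool, q w * (c * ind w ℓ) = c * ∑ w : Fin L → Bool, q w * ind w ℓ := by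
      rw [Finset.mul_sum]; apply Finset.sum_congr rfl; intros; ring
    rw [this, hqm ℓ, hy]
    field_simp
  rw [hxsum]
  have hsub : ∑ w : Fin L → Bool, q w • (c • ind w : Fin L → ℝ)
      = ∑ w ∈ univ.filter (fun w => q w ≠ 0), q w • (c • ind w : Fin L → ℝ) := by
    symm
    apply Finset.sum_subset (Finset.filter_subset _ _)
    intro w _ hw
    simp only [Finset.mem_filter, Finset.mem_univ, true_and, not_not] at hw
    simp [hw]
  rw [hsub]
  apply Convex.sum_mem (convex_convexHull ℝ S)
  · intro w _; exact hq0 w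
  · rw [Finset.sum_filter_ne_zero]; exact hq1
  · intro w hw
    exact hz w (by simpa using (Finset.mem_filter.mp hw).2)

theorem stmt1 (L : ℕ) (hL : 0 < L) (d : ℕ → ℝ)
    (hd_pos : ∀ k, 0 < d k)
    (hd_mono : ∀ j k, j ≤ k → d k ≤ d j) :
    (⋃ p ∈ {p : (Fin L → Bool) → ℝ | (∀ v, 0 ≤ p v) ∧ (∑ v, p v) = 1},
      {lam : Fin L → ℝ | (∀ ℓ, 0 ≤ lam ℓ) ∧
        ∀ ℓ, lam ℓ ≤ (∑ v, p v • (d (cnt v) • ind v)) ℓ})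
    = convexHull ℝ {x : Fin L → ℝ | ∃ v : Fin L → Bool, x = d (cnt v) • ind v} := by
  set S := {x : Fin L → ℝ | ∃ v : Fin L → Bool, x = d (cnt v) • ind v} with hSdef
  set f : (Fin L → Bool) → (Fin L → ℝ) := fun v => d (cnt v) • ind v with hf
  have hfinj : Function.Injective f := by
    intro v1 v2 h
    funext ℓ
    have hℓ := congrFun h ℓ
    simp only [hf, Pi.smul_apply, smul_eq_mul, ind] at hℓ
    have h1 := hd_pos (cnt v1)
    have h2 := hd_pos (cnt v2)
    cases hv1 : v1 ℓ <;> cases hv2 : v2 ℓ <;> simp [hv1, hv2] at hℓ <;> first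
      | rfl | linarith
  have hsum_apply : ∀ (p : (Fin L → Bool) → ℝ) (ℓ : Fin L),
      (∑ v, p v • (d (cnt v) • ind v)) ℓ = ∑ v, p v * (d (cnt v) * ind v ℓ) := by
    intro p ℓ
    rw [Finset.sum_apply]
    simp
  ext lam
  simp only [Set.mem_iUnion, Set.mem_setOf_eq, exists_prop]
  constructor
  · rintro ⟨p, ⟨hp0, hp1⟩, hlam0, hle⟩
    set μ : Fin L → ℝ := fun ℓ => ∑ v, p v * (d (cnt v) * ind v ℓ) with hμ
    have hleμ : ∀ ℓ, lam ℓ ≤ μ ℓ := by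
      intro ℓ
      show lam ℓ ≤ ∑ v, p v * (d (cnt v) * ind v ℓ)
      rw [← hsum_apply p ℓ]; exact hle ℓ
    have hμ0 : ∀ ℓ, 0 ≤ μ ℓ := by
      intro ℓ
      show (0:ℝ) ≤ ∑ v, p v * (d (cnt v) * ind v ℓ)
      apply Finset.sum_nonneg
      intro v _
      exact mul_nonneg (hp0 v) (mul_nonneg (hd_pos _).le (ind_nonneg v ℓ))
    set lamv : (Fin L → Bool) → Fin L → ℝ := fun v ℓ =>
      if μ ℓ = 0 then 0 else (d (cnt v) * ind v ℓ) * (lam ℓ / μ ℓ) with hlamv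
    have hratio : ∀ ℓ, μ ℓ ≠ 0 → 0 ≤ lam ℓ / μ ℓ ∧ lam ℓ / μ ℓ ≤ 1 := by
      intro ℓ hne
      have hpos : 0 < μ ℓ := lt_of_le_of_ne (hμ0 ℓ) (Ne.symm hne)
      constructor
      · exact div_nonneg (hlam0 ℓ) hpos.le
      · rw [div_le_one hpos]; exact hleμ ℓ
    have hlamv_mem : ∀ v, lamv v ∈ convexHull ℝ S := by
      intro v
      apply box_mem d hd_pos hd_mono v
      · intro ℓ
        rw [hlamv]
        by_cases h : μ ℓ = 0
        · simp [h]
        · simp only [h, if_false]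
          have := (hratio ℓ h).1
          have := ind_nonneg v ℓ
          have := hd_pos (cnt v)
          positivity
      · intro ℓ
        rw [hlamv]
        by_cases h : μ ℓ = 0
        · simp only [h, if_true]
          have := ind_nonneg v ℓ
          have := hd_pos (cnt v)
          positivity
        · simp only [h, if_false]
          have h1 := (hratio ℓ h).2
          have hnn : 0 ≤ d (cnt v) * ind v ℓ := by
            have := ind_nonneg v ℓ; have := hd_pos (cnt v); positivity
          exact mul_le_of_le_one_right hnn h1
    have hdecomp : lam = ∑ v, p v • lamv v := by
      funext ℓ
      rw [Finset.sum_apply]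
      simp only [Pi.smul_apply, smul_eq_mul]
      by_cases h : μ ℓ = 0
      · have hlamℓ : lam ℓ = 0 := le_antisymm (by rw [← h]; exact hleμ ℓ) (hlam0 ℓ)
        rw [hlamℓ]
        symm
        apply Finset.sum_eq_zero
        intro v _
        simp [hlamv, h]
      · have : ∀ v, p v * lamv v ℓ = (p v * (d (cnt v) * ind v ℓ)) * (lam ℓ / μ ℓ) := by
          intro v; simp only [hlamv, h, if_false]; ring
        rw [Finset.sum_congr rfl fun v _ => this v, ← Finset.sum_mul]
        have hμℓ : (∑ i : Fin L → Bool, p i * (d (cnt i) * ind i ℓ)) = μ ℓ := rfl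
        rw [hμℓ]
        field_simp
    rw [hdecomp]
    exact Convex.sum_mem (convex_convexHull ℝ S) (fun v _ => hp0 v)
      hp1 (fun v _ => hlamv_mem v)
  · intro hmem
    have hSeq : S = ↑((univ : Finset (Fin L → Bool)).image f) := by
      ext x
      simp only [hSdef, Set.mem_setOf_eq, Finset.coe_image, Set.mem_image,
        Finset.mem_coe, Finset.coe_univ, Set.image_univ, Set.mem_range]
      exact ⟨fun ⟨v, h⟩ => ⟨v, h.symm⟩, fun ⟨v, h⟩ => ⟨v, h.symm⟩⟩
    rw [hSeq, Finset.convexHull_eq] at hmem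
    obtain ⟨w, hw0, hw1, hwc⟩ := hmem
    set p : (Fin L → Bool) → ℝ := fun v => w (f v) with hp
    have hp0 : ∀ v, 0 ≤ p v := fun v => hw0 _ (Finset.mem_image_of_mem f (mem_univ v))
    have hinjOn : ∀ x ∈ (univ : Finset (Fin L → Bool)), ∀ y ∈ (univ : Finset (Fin L → Bool)),
        f x = f y → x = y := fun x _ y _ h => hfinj h
    have hp1 : ∑ v, p v = 1 := by
      rw [hp]
      rw [← Finset.sum_image hinjOn]
      exact hw1
    have hlameq : lam = ∑ v, p v • f v := by
      rw [← hwc, Finset.centerMass_eq_of_sum_1 _ id hw1,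
        Finset.sum_image hinjOn]
      rfl
    refine ⟨p, ⟨hp0, hp1⟩, ?_, ?_⟩
    · intro ℓ
      rw [hlameq]
      rw [Finset.sum_apply]
      apply Finset.sum_nonneg
      intro v _
      simp only [Pi.smul_apply, smul_eq_mul, hf]
      exact mul_nonneg (hp0 v) (mul_nonneg (hd_pos _).le (ind_nonneg v ℓ))
    · intro ℓ
      rw [hlameq]
end

section
/- Let v ∈ {0,1}^L with ‖v‖_1 = m, m in the index set I = {k : k·d(k) > max_{0≤j<k} j·d(j)}. Then the point s = d(m)·v is an exposed point of the convex hull of R = {d(‖u‖_1)·u : u ∈ {0,1}^L}: for every u ∈ {0,1}^L with d(‖u‖_1)·u ≠ s, the inner product ⟨d(‖u‖_1)·u, v⟩ < m·d(m), while ⟨s, v⟩ = m·d(m). -/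
open Finset

lemma ind_sum {L : ℕ} (u v : Fin L → Bool) :
    (∑ ℓ, ind u ℓ * ind v ℓ) =
      ((Finset.univ.filter (fun ℓ => u ℓ = true ∧ v ℓ = true)).card : ℝ) := by
  rw [Finset.card_filter]
  push_cast
  apply Finset.sum_congr rfl
  intro ℓ _
  simp only [ind]
  by_cases hu : u ℓ <;> by_cases hv : v ℓ <;> simp [hu, hv]

lemma cnt_le {L : ℕ} (u : Fin L → Bool) : cnt u ≤ L := by
  simpa [cnt] using Finset.card_filter_le Finset.univ (fun ℓ => u ℓ = true)

theorem stmt2 (L m : ℕ) (d : ℕ → ℝ)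
    (hd_pos : ∀ k ≤ L, 0 < d k)
    (hd_dec : ∀ j k, j < k → k ≤ L → d k < d j)
    (hm : 1 ≤ m) (hmL : m ≤ L)
    -- `m` belongs to the index set `I = {k : k·d(k) > max_{0 ≤ j < k} j·d(j)}`
    (hmI : ∀ j < m, (j : ℝ) * d j < (m : ℝ) * d m)
    (v : Fin L → Bool) (hv : cnt v = m) :
    (∀ u : Fin L → Bool, d (cnt u) • ind u ≠ d m • ind v →
      (∑ ℓ, (d (cnt u) • ind u) ℓ * ind v ℓ) < (m : ℝ) * d m)
    ∧ (∑ ℓ, (d m • ind v) ℓ * ind v ℓ) = (m : ℝ) * d m := by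
  constructor
  · intro u hne
    set k := cnt u with hk
    have hsum : (∑ ℓ, (d k • ind u) ℓ * ind v ℓ)
        = d k * ((Finset.univ.filter (fun ℓ => u ℓ = true ∧ v ℓ = true)).card : ℝ) := by
      rw [← ind_sum u v, Finset.mul_sum]
      apply Finset.sum_congr rfl
      intro ℓ _
      simp [mul_assoc]
    set T := Finset.univ.filter (fun ℓ => u ℓ = true ∧ v ℓ = true) with hT
    have hTu : T ⊆ Finset.univ.filter (fun ℓ => u ℓ = true) := by
      intro x hx; simp only [hT, Finset.mem_filter] at hx ⊢; exact ⟨hx.1, hx.2.1⟩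
    have hTv : T ⊆ Finset.univ.filter (fun ℓ => v ℓ = true) := by
      intro x hx; simp only [hT, Finset.mem_filter] at hx ⊢; exact ⟨hx.1, hx.2.2⟩
    have hTk : T.card ≤ k := Finset.card_le_card hTu
    have hTm : T.card ≤ m := hv ▸ Finset.card_le_card hTv
    have hkL : k ≤ L := cnt_le u
    have hdk : 0 < d k := hd_pos k hkL
    rw [hsum]
    rcases lt_trichotomy k m with hlt | heq | hgt
    · calc d k * (T.card : ℝ) ≤ d k * k := by
            exact mul_le_mul_of_nonneg_left (by exact_mod_cast hTk) hdk.le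
        _ = (k : ℝ) * d k := mul_comm _ _
        _ < (m : ℝ) * d m := hmI k hlt
    · -- k = m : then T.card < m, else u = v
      have hTlt : T.card < m := by
        rcases lt_or_eq_of_le hTm with h | h
        · exact h
        · exfalso
          have h1 : Finset.univ.filter (fun ℓ => v ℓ = true) = T := by
            apply (Finset.eq_of_subset_of_card_le hTv _).symm
            exact le_of_eq (hv.trans h.symm)
          have h2 : Finset.univ.filter (fun ℓ => u ℓ = true) = T := by
            apply (Finset.eq_of_subset_of_card_le hTu _).symm
            exact le_of_eq (heq.trans h.symm)
          have huv : u = v := by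
            funext ℓ
            have : ℓ ∈ Finset.univ.filter (fun ℓ => u ℓ = true) ↔
                ℓ ∈ Finset.univ.filter (fun ℓ => v ℓ = true) := by rw [h1, h2]
            simp only [Finset.mem_filter, Finset.mem_univ, true_and] at this
            cases hu : u ℓ <;> cases hv' : v ℓ <;> simp_all
          apply hne
          rw [huv, heq]
      have : d k * (T.card : ℝ) < d k * m :=
        mul_lt_mul_of_pos_left (by exact_mod_cast hTlt) hdk
      calc d k * (T.card : ℝ) < d k * m := this
        _ = (m : ℝ) * d m := by rw [heq, mul_comm]
    · have hdm : d k < d m := hd_dec m k hgt hkL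
      have hm0 : (0 : ℝ) < m := by exact_mod_cast hm
      calc d k * (T.card : ℝ) ≤ d k * m :=
            mul_le_mul_of_nonneg_left (by exact_mod_cast hTm) hdk.le
        _ < d m * m := by exact mul_lt_mul_of_pos_right hdm hm0
        _ = (m : ℝ) * d m := mul_comm _ _
  · have : (∑ ℓ, (d m • ind v) ℓ * ind v ℓ)
        = d m * ((Finset.univ.filter (fun ℓ => v ℓ = true ∧ v ℓ = true)).card : ℝ) := by
      rw [← ind_sum v v, Finset.mul_sum]
      apply Finset.sum_congr rfl
      intro ℓ _; simp [mul_assoc]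
    rw [this]
    have : (Finset.univ.filter (fun ℓ => v ℓ = true ∧ v ℓ = true)) =
        (Finset.univ.filter (fun ℓ => v ℓ = true)) := by
      apply Finset.filter_congr; intro x _; simp
    rw [this]
    have : ((Finset.univ.filter (fun ℓ => v ℓ = true)).card : ℝ) = (m : ℝ) := by
      exact_mod_cast congrArg Nat.cast hv
    rw [this, mul_comm]
end

section
/- Let d : {0,...,L} → ℝ_{>0} be strictly decreasing and suppose a ∈ {1,...,L} satisfies a·d(a) ≤ max_{0≤m<a} m·d(m). Let m̃ = argmax_{0≤m<a} m·d(m) and let v̂ ∈ {0,1}^L have exactly a ones. Then d(a)·v̂ lies in the convex hull of {0} ∪ {d(m̃)·v : v ∈ {0,1}^L, ‖v‖_1 = m̃, v ⪯ v̂}. In particular, the average z = (1/|W|)·∑_{v∈W} d(m̃)·v over W = {v ∈ {0,1}^L : ‖v‖_1 = m̃, v ⪯ v̂} equals (m̃/a)·d(m̃)·v̂, and d(a)·v̂ lies on the segment [0, z]. -/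
open Finset

lemma countA (n : ℕ) (S : Finset (Fin n)) (k : ℕ) :
    (Finset.univ.filter (fun v : Fin n → Bool => cnt v = k ∧ ∀ ℓ, v ℓ = true → ℓ ∈ S)).card
      = S.card.choose k := by
  rw [← Finset.card_powersetCard]
  apply Finset.card_nbij' (fun v => Finset.univ.filter (fun ℓ => v ℓ = true))
    (fun t => fun ℓ => decide (ℓ ∈ t))
  · intro v hv
    simp only [Finset.mem_coe, mem_filter, mem_univ, true_and] at hv
    rw [Finset.mem_coe, Finset.mem_powersetCard]
    exact ⟨fun ℓ hℓ => hv.2 ℓ (by simpa using hℓ), hv.1⟩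
  · intro t ht
    rw [Finset.mem_coe, Finset.mem_powersetCard] at ht
    simp only [Finset.mem_coe, mem_filter, mem_univ, true_and]
    constructor
    · unfold cnt
      rw [← ht.2]
      congr 1
      ext ℓ; simp
    · intro ℓ hℓ
      exact ht.1 (by simpa using hℓ)
  · intro v _; funext ℓ; simp
  · intro t _; ext ℓ; simp

lemma countB (n : ℕ) (S : Finset (Fin n)) (k : ℕ) (hk : 1 ≤ k) (ℓ₀ : Fin n) (hℓ₀ : ℓ₀ ∈ S) :
    (Finset.univ.filter (fun v : Fin n → Bool =>
        (cnt v = k ∧ ∀ ℓ, v ℓ = true → ℓ ∈ S) ∧ v ℓ₀ = true)).card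
      = (S.card - 1).choose (k - 1) := by
  rw [← Finset.card_erase_of_mem hℓ₀, ← Finset.card_powersetCard]
  apply Finset.card_nbij' (fun v => (Finset.univ.filter (fun ℓ => v ℓ = true)).erase ℓ₀)
    (fun u => fun ℓ => decide (ℓ = ℓ₀ ∨ ℓ ∈ u))
  · intro v hv
    simp only [Finset.mem_coe, mem_filter, mem_univ, true_and] at hv
    rw [Finset.mem_coe, Finset.mem_powersetCard]
    refine ⟨?_, ?_⟩
    · intro ℓ hℓ
      simp only [mem_erase, mem_filter, mem_univ, true_and] at hℓ
      exact Finset.mem_erase.2 ⟨hℓ.1, hv.1.2 ℓ hℓ.2⟩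
    · rw [Finset.card_erase_of_mem (by simpa using hv.2)]
      have h1 : (Finset.univ.filter (fun ℓ => v ℓ = true)).card = k := hv.1.1
      omega
  · intro u hu
    rw [Finset.mem_coe, Finset.mem_powersetCard] at hu
    have hℓ₀u : ℓ₀ ∉ u := fun h => (Finset.mem_erase.1 (hu.1 h)).1 rfl
    simp only [Finset.mem_coe, mem_filter, mem_univ, true_and, decide_eq_true_eq]
    refine ⟨⟨?_, ?_⟩, by simp⟩
    · unfold cnt
      have : (Finset.univ.filter (fun ℓ => decide (ℓ = ℓ₀ ∨ ℓ ∈ u) = true)) = insert ℓ₀ u := by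
        ext ℓ; simp
      rw [this, Finset.card_insert_of_notMem hℓ₀u, hu.2]
      omega
    · intro ℓ hℓ
      rcases hℓ with rfl | hℓ
      · exact hℓ₀
      · exact Finset.mem_of_mem_erase (hu.1 hℓ)
  · intro v hv
    simp only [Finset.mem_coe, mem_filter, mem_univ, true_and] at hv
    funext ℓ
    by_cases h : ℓ = ℓ₀
    · subst h; simp [hv.2]
    · simp [h]
  · intro u hu
    rw [Finset.mem_coe, Finset.mem_powersetCard] at hu
    have hℓ₀u : ℓ₀ ∉ u := fun h => (Finset.mem_erase.1 (hu.1 h)).1 rfl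
    ext ℓ
    simp only [mem_erase, mem_filter, mem_univ, true_and, decide_eq_true_eq]
    constructor
    · rintro ⟨h1, rfl | h2⟩
      · exact absurd rfl h1
      · exact h2
    · intro h; exact ⟨fun e => hℓ₀u (e ▸ h), Or.inr h⟩

theorem stmt3 (L a mt : ℕ) (hL : 1 ≤ L) (d : ℕ → ℝ)
    (hd_pos : ∀ k ≤ L, 0 < d k)
    (hd_dec : ∀ j k, j < k → k ≤ L → d k < d j)
    (ha1 : 1 ≤ a) (haL : a ≤ L)
    (hmt1 : 1 ≤ mt) (hmt_lt : mt < a)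
    -- `mt` is the argmax of `m ↦ m·d(m)` over `0 ≤ m < a`
    (hmt_max : ∀ m' < a, (m' : ℝ) * d m' ≤ (mt : ℝ) * d mt)
    -- `a·d(a) ≤ max_{0 ≤ m < a} m·d(m)`
    (ha_le : (a : ℝ) * d a ≤ (mt : ℝ) * d mt)
    (vhat : Fin L → Bool) (hvhat : cnt vhat = a) :
    let W : Finset (Fin L → Bool) :=
      Finset.univ.filter (fun v => cnt v = mt ∧ ∀ ℓ, v ℓ = true → vhat ℓ = true)
    let z : Fin L → ℝ := (W.card : ℝ)⁻¹ • ∑ v ∈ W, d mt • ind v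
    z = ((mt : ℝ) / (a : ℝ)) • (d mt • ind vhat)
    ∧ d a • ind vhat ∈ segment ℝ (0 : Fin L → ℝ) z
    ∧ d a • ind vhat ∈ convexHull ℝ
        ({0} ∪ {x : Fin L → ℝ | ∃ v : Fin L → Bool,
          cnt v = mt ∧ (∀ ℓ, v ℓ = true → vhat ℓ = true) ∧ x = d mt • ind v}) := by
  intro W z
  set S : Finset (Fin L) := Finset.univ.filter (fun ℓ => vhat ℓ = true) with hSdef
  have hS : S.card = a := hvhat
  have hWeq : W = Finset.univ.filter
      (fun v : Fin L → Bool => cnt v = mt ∧ ∀ ℓ, v ℓ = true → ℓ ∈ S) := by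
    apply Finset.filter_congr
    intro v _
    simp [hSdef]
  have hWcard : W.card = a.choose mt := by
    rw [hWeq, countA, hS]
  -- some positivity facts
  have hmtL : mt ≤ L := le_trans hmt_lt.le haL
  have hdmt : 0 < d mt := hd_pos mt hmtL
  have hda : 0 < d a := hd_pos a haL
  have hapos : (0:ℝ) < a := by exact_mod_cast ha1
  have hmtpos : (0:ℝ) < mt := by exact_mod_cast hmt1
  have hchpos : (0:ℝ) < a.choose mt := by
    exact_mod_cast Nat.choose_pos hmt_lt.le
  -- the key choose identity
  have hchoose : (a : ℝ) * ((a-1).choose (mt-1) : ℝ) = (a.choose mt : ℝ) * mt := by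
    have h := Nat.add_one_mul_choose_eq (a-1) (mt-1)
    have h1 : a - 1 + 1 = a := by omega
    have h2 : mt - 1 + 1 = mt := by omega
    rw [h1, h2] at h
    exact_mod_cast h
  -- per-coordinate sum
  have hsum : ∀ ℓ : Fin L, (∑ v ∈ W, d mt • ind v) ℓ
      = d mt * (if vhat ℓ = true then ((a-1).choose (mt-1) : ℝ) else 0) := by
    intro ℓ
    rw [Finset.sum_apply]
    simp only [Pi.smul_apply, smul_eq_mul, ind]
    rw [← Finset.mul_sum, Finset.sum_boole]
    congr 1
    by_cases hℓ : vhat ℓ = true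
    · rw [if_pos hℓ]
      have hmem : ℓ ∈ S := by simp [hSdef, hℓ]
      have := countB L S mt hmt1 ℓ hmem
      rw [← hS]
      rw [← this]
      congr 1
      rw [hWeq, Finset.filter_filter]
    · rw [if_neg hℓ]
      have : W.filter (fun v => v ℓ = true) = ∅ := by
        rw [Finset.filter_eq_empty_iff]
        intro v hv
        rw [hWeq, Finset.mem_filter] at hv
        intro hvℓ
        have hmem := hv.2.2 ℓ hvℓ
        rw [hSdef, Finset.mem_filter] at hmem
        exact absurd hmem.2 (by simp [hℓ])
      rw [this]
      simp
  -- part 1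
  have hz1 : z = ((mt : ℝ) / (a : ℝ)) • (d mt • ind vhat) := by
    funext ℓ
    show (W.card : ℝ)⁻¹ • (∑ v ∈ W, d mt • ind v) ℓ = _
    rw [hsum ℓ, hWcard]
    simp only [Pi.smul_apply, smul_eq_mul, ind]
    by_cases hℓ : vhat ℓ = true
    · rw [if_pos hℓ, if_pos hℓ]
      field_simp
      linear_combination hchoose
    · rw [if_neg hℓ, if_neg hℓ]
      ring
  refine ⟨hz1, ?_, ?_⟩
  -- part 2
  · have hmd : (0:ℝ) < (mt : ℝ) * d mt := mul_pos hmtpos hdmt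
    set t : ℝ := ((a : ℝ) * d a) / ((mt : ℝ) * d mt) with htdef
    have ht0 : 0 ≤ t := div_nonneg (by positivity) hmd.le
    have ht1 : t ≤ 1 := (div_le_one hmd).2 ha_le
    refine ⟨1 - t, t, by linarith, ht0, by ring, ?_⟩
    rw [hz1, smul_zero, zero_add, smul_smul, smul_smul]
    congr 1
    rw [htdef]
    field_simp
  -- part 3
  · set T : Set (Fin L → ℝ) := {x : Fin L → ℝ | ∃ v : Fin L → Bool,
      cnt v = mt ∧ (∀ ℓ, v ℓ = true → vhat ℓ = true) ∧ x = d mt • ind v} with hTdef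
    have hzT : z ∈ convexHull ℝ T := by
      have hzc : z = W.centerMass (fun _ => (1:ℝ)) (fun v => d mt • ind v) := by
        rw [Finset.centerMass]
        simp [Finset.sum_const, nsmul_eq_mul]
        rfl
      rw [hzc]
      apply Finset.centerMass_mem_convexHull
      · intro i _; norm_num
      · rw [Finset.sum_const, nsmul_eq_mul, mul_one, hWcard]
        exact hchpos
      · intro v hv
        have hv' := Finset.mem_filter.1 hv
        exact ⟨v, hv'.2.1, hv'.2.2, rfl⟩
    have h0 : (0 : Fin L → ℝ) ∈ convexHull ℝ ({0} ∪ T) :=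
      subset_convexHull ℝ _ (Or.inl rfl)
    have hz' : z ∈ convexHull ℝ ({0} ∪ T) :=
      convexHull_mono Set.subset_union_right hzT
    -- reuse part 2: d a • ind vhat ∈ segment ℝ 0 z
    have hseg : d a • ind vhat ∈ segment ℝ (0 : Fin L → ℝ) z := by
      have hmd : (0:ℝ) < (mt : ℝ) * d mt := mul_pos hmtpos hdmt
      set t : ℝ := ((a : ℝ) * d a) / ((mt : ℝ) * d mt) with htdef
      have ht0 : 0 ≤ t := div_nonneg (by positivity) hmd.le
      have ht1 : t ≤ 1 := (div_le_one hmd).2 ha_le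
      refine ⟨1 - t, t, by linarith, ht0, by ring, ?_⟩
      rw [hz1, smul_zero, zero_add, smul_smul, smul_smul]
      congr 1
      rw [htdef]
      field_simp
    exact (convex_convexHull ℝ _).segment_subset h0 hz' hseg
end

section
/- For integers 1 ≤ m < k ≤ L and θ > 0, the ratio of upper incomplete gamma functions Γ(L−k+1, kθ/P) / Γ(L−m+1, mθ/P) tends to 0 as P → 0⁺. -/
open MeasureTheory Filter Topology

lemma aux_ptwise (n : ℕ) {ε t : ℝ} (hε : 0 < ε) (ht : 0 ≤ t) :
    t ^ n * Real.exp (-t) ≤ ((n.factorial : ℝ) / ε ^ n) * Real.exp (-((1 - ε) * t)) := by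
  have h1 : (ε * t) ^ n / (n.factorial : ℝ) ≤ Real.exp (ε * t) :=
    Real.pow_div_factorial_le_exp (x := ε * t) (by positivity) n
  have hfac : (0:ℝ) < (n.factorial : ℝ) := by positivity
  have h2 : t ^ n ≤ ((n.factorial : ℝ) / ε ^ n) * Real.exp (ε * t) := by
    rw [div_mul_eq_mul_div, le_div_iff₀ (by positivity)]
    have : (ε * t) ^ n ≤ (n.factorial : ℝ) * Real.exp (ε * t) := by
      rw [div_le_iff₀ hfac] at h1; linarith
    calc t ^ n * ε ^ n = (ε * t) ^ n := by rw [mul_pow]; ring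
      _ ≤ (n.factorial : ℝ) * Real.exp (ε * t) := this
  calc t ^ n * Real.exp (-t)
      ≤ (((n.factorial : ℝ) / ε ^ n) * Real.exp (ε * t)) * Real.exp (-t) :=
        mul_le_mul_of_nonneg_right h2 (Real.exp_pos _).le
    _ = ((n.factorial : ℝ) / ε ^ n) * Real.exp (-((1 - ε) * t)) := by
        rw [mul_assoc, ← Real.exp_add]; ring_nf

lemma aux_integrableOn (n : ℕ) {a : ℝ} (ha : 0 ≤ a) :
    IntegrableOn (fun t : ℝ => t ^ n * Real.exp (-t)) (Set.Ioi a) := by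
  have hg : IntegrableOn
      (fun t : ℝ => ((n.factorial : ℝ) / (2⁻¹ : ℝ) ^ n) * Real.exp (-((1 - 2⁻¹) * t)))
      (Set.Ioi a) := by
    apply Integrable.const_mul
    have := exp_neg_integrableOn_Ioi a (show (0:ℝ) < 1 - 2⁻¹ by norm_num)
    simpa only [neg_mul, IntegrableOn] using this
  refine hg.mono' ?_ ?_
  · exact ((continuous_pow n).mul
      (Real.continuous_exp.comp continuous_neg)).aestronglyMeasurable
  · filter_upwards [ae_restrict_mem measurableSet_Ioi] with t ht
    have ht0 : 0 ≤ t := ha.trans (le_of_lt ht)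
    rw [Real.norm_eq_abs, abs_of_nonneg (by positivity)]
    exact aux_ptwise n (by norm_num) ht0

lemma aux_exp_integral {c : ℝ} (hc : 0 < c) (a : ℝ) :
    ∫ t in Set.Ioi a, Real.exp (-(c * t)) = Real.exp (-(c * a)) / c := by
  have hderiv : ∀ x ∈ Set.Ici a,
      HasDerivAt (fun t => -Real.exp (-(c * t)) / c) (Real.exp (-(c * x))) x := by
    intro x _
    have h : HasDerivAt (fun t : ℝ => -(c * t)) (-c) x := by
      simpa using (hasDerivAt_id x).const_mul (-c)
    have := (h.exp.neg).div_const c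
    exact this.congr_deriv (by field_simp)
  have hint : IntegrableOn (fun t : ℝ => Real.exp (-(c * t))) (Set.Ioi a) := by
    simpa only [neg_mul] using exp_neg_integrableOn_Ioi a hc
  have htend : Tendsto (fun t : ℝ => -Real.exp (-(c * t)) / c) atTop (𝓝 (-0 / c)) := by
    refine Tendsto.div_const (Tendsto.neg ?_) _
    refine Real.tendsto_exp_atBot.comp ?_
    have : Tendsto (fun t : ℝ => -c * t) atTop atBot :=
      tendsto_id.const_mul_atTop_of_neg (by linarith)
    simpa only [neg_mul] using this
  have := MeasureTheory.integral_Ioi_of_hasDerivAt_of_tendsto' hderiv hint htend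
  rw [this]
  field_simp
  ring

/-- As `P → 0⁺`, the ratio of upper incomplete gamma functions
`Γ(L−k+1, kθ/P) / Γ(L−m+1, mθ/P)` tends to `0`, for integers `1 ≤ m < k ≤ L` and `θ > 0`. -/
theorem stmt4 (L m k : ℕ) (hm : 1 ≤ m) (hmk : m < k) (hkL : k ≤ L)
    (θ : ℝ) (hθ : 0 < θ) :
    Tendsto (fun P : ℝ =>
        (∫ t in Set.Ioi ((k : ℝ) * θ / P), t ^ (L - k) * Real.exp (-t)) /
        (∫ t in Set.Ioi ((m : ℝ) * θ / P), t ^ (L - m) * Real.exp (-t)))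
      (nhdsWithin 0 (Set.Ioi 0)) (nhds 0) := by
  have hm1 : (1:ℝ) ≤ m := by exact_mod_cast hm
  have hk0 : (0:ℝ) < k := by
    have : 0 < k := lt_of_le_of_lt (Nat.zero_le m) hmk
    exact_mod_cast this
  have hmk' : (m:ℝ) < k := by exact_mod_cast hmk
  set ε : ℝ := ((k:ℝ) - m) / (2 * k) with hεdef
  have hε : 0 < ε := div_pos (by linarith) (by positivity)
  have hε1 : ε < 1 := by
    rw [hεdef, div_lt_one (by positivity)]; linarith
  set c : ℝ := 1 - ε with hcdef
  have hc : 0 < c := by simp only [hcdef]; linarith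
  have hck : c * k - m = ((k:ℝ) - m) / 2 := by
    rw [hcdef, hεdef]; field_simp; ring
  set C : ℝ := (Nat.factorial (L - k) : ℝ) / ε ^ (L - k) / c with hCdef
  clear_value ε c C
  -- the key limit along atTop
  have key : Tendsto (fun y : ℝ =>
      (∫ t in Set.Ioi ((k:ℝ) * y), t ^ (L - k) * Real.exp (-t)) /
      (∫ t in Set.Ioi ((m:ℝ) * y), t ^ (L - m) * Real.exp (-t))) atTop (𝓝 0) := by
    have hg : Tendsto (fun y : ℝ => C * Real.exp ((m:ℝ) * y - c * ((k:ℝ) * y)))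
        atTop (𝓝 0) := by
      have h1 : Tendsto (fun y : ℝ => (m:ℝ) * y - c * ((k:ℝ) * y)) atTop atBot := by
        have heq : (fun y : ℝ => (m:ℝ) * y - c * ((k:ℝ) * y)) =
            fun y : ℝ => ((m:ℝ) - c * k) * y := by ext y; ring
        rw [heq]
        refine tendsto_id.const_mul_atTop_of_neg ?_
        have : (0:ℝ) < ((k:ℝ) - m) / 2 := by linarith
        linarith [hck]
      have := (Real.tendsto_exp_atBot.comp h1).const_mul C
      simpa using this
    refine squeeze_zero' ?_ ?_ hg
    · filter_upwards [eventually_ge_atTop (1:ℝ)] with y hy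
      have hky : (0:ℝ) ≤ (k:ℝ) * y := by positivity
      have hmy : (0:ℝ) ≤ (m:ℝ) * y := by positivity
      refine div_nonneg ?_ ?_
      · refine setIntegral_nonneg measurableSet_Ioi fun t ht => ?_
        have ht0 : 0 ≤ t := hky.trans ht.le
        positivity
      · refine setIntegral_nonneg measurableSet_Ioi fun t ht => ?_
        have ht0 : 0 ≤ t := hmy.trans ht.le
        positivity
    · filter_upwards [eventually_ge_atTop (1:ℝ)] with y hy
      have hy0 : (0:ℝ) ≤ y := by linarith
      have hky : (0:ℝ) ≤ (k:ℝ) * y := by positivity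
      have hmy : (0:ℝ) ≤ (m:ℝ) * y := by positivity
      have hmy1 : (1:ℝ) ≤ (m:ℝ) * y := by nlinarith
      -- denominator lower bound
      have den_lb : Real.exp (-((m:ℝ) * y)) ≤
          ∫ t in Set.Ioi ((m:ℝ) * y), t ^ (L - m) * Real.exp (-t) := by
        have hint1 : IntegrableOn (fun t : ℝ => Real.exp (-t)) (Set.Ioi ((m:ℝ) * y)) := by
          simpa only [neg_mul, one_mul] using exp_neg_integrableOn_Ioi ((m:ℝ) * y) one_pos
        have := setIntegral_mono_on (μ := volume) hint1 (aux_integrableOn (L - m) hmy)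
          measurableSet_Ioi (fun t ht => ?_)
        · rwa [integral_exp_neg_Ioi] at this
        · have ht1 : (1:ℝ) ≤ t := hmy1.trans ht.le
          have : (1:ℝ) ≤ t ^ (L - m) := one_le_pow₀ ht1
          nlinarith [Real.exp_pos (-t)]
      have den_pos : 0 < ∫ t in Set.Ioi ((m:ℝ) * y), t ^ (L - m) * Real.exp (-t) :=
        lt_of_lt_of_le (Real.exp_pos _) den_lb
      -- numerator upper bound
      have num_ub : (∫ t in Set.Ioi ((k:ℝ) * y), t ^ (L - k) * Real.exp (-t)) ≤
          ((Nat.factorial (L - k) : ℝ) / ε ^ (L - k)) *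
            (Real.exp (-(c * ((k:ℝ) * y))) / c) := by
        have hint2 : IntegrableOn
            (fun t : ℝ => ((Nat.factorial (L - k) : ℝ) / ε ^ (L - k)) *
              Real.exp (-(c * t))) (Set.Ioi ((k:ℝ) * y)) := by
          apply Integrable.const_mul
          simpa only [neg_mul, IntegrableOn] using exp_neg_integrableOn_Ioi ((k:ℝ) * y) hc
        have hmono := setIntegral_mono_on (μ := volume) (aux_integrableOn (L - k) hky)
          hint2 measurableSet_Ioi (fun t ht => ?_)
        · rw [integral_const_mul, aux_exp_integral hc] at hmono
          exact hmono
        · have ht0 : 0 ≤ t := hky.trans ht.le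
          simpa [hcdef, neg_mul] using aux_ptwise (L - k) hε ht0
      have num_nonneg : 0 ≤ ∫ t in Set.Ioi ((k:ℝ) * y), t ^ (L - k) * Real.exp (-t) := by
        refine setIntegral_nonneg measurableSet_Ioi fun t ht => ?_
        have ht0 : 0 ≤ t := hky.trans ht.le
        positivity
      calc (∫ t in Set.Ioi ((k:ℝ) * y), t ^ (L - k) * Real.exp (-t)) /
            (∫ t in Set.Ioi ((m:ℝ) * y), t ^ (L - m) * Real.exp (-t))
          ≤ (((Nat.factorial (L - k) : ℝ) / ε ^ (L - k)) *
              (Real.exp (-(c * ((k:ℝ) * y))) / c)) / Real.exp (-((m:ℝ) * y)) :=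
            div_le_div₀ (by positivity) num_ub (Real.exp_pos _) den_lb
        _ = C * Real.exp ((m:ℝ) * y - c * ((k:ℝ) * y)) := by
            rw [hCdef, Real.exp_sub, Real.exp_neg, Real.exp_neg]
            field_simp
  -- transfer to P → 0⁺
  have hP : Tendsto (fun P : ℝ => θ / P) (nhdsWithin 0 (Set.Ioi 0)) atTop := by
    have := tendsto_inv_nhdsGT_zero (𝕜 := ℝ)
    have h2 := this.const_mul_atTop hθ
    refine h2.congr fun P => ?_
    rw [div_eq_mul_inv]
  have := key.comp hP
  refine this.congr fun P => ?_
  simp only [Function.comp_apply, mul_div_assoc]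
end

section
/- For B ≥ 0, L ≥ 2, θ > 0, P > 0, K with 1 ≤ K ≤ L, define f(B) = 2^{−B/(L−1)}(1 − 1/L)(1+θ)(K−1+θK/P) / (1 − 2^{−B/(L−1)}(1 + (K−1)θ)), assuming the denominator is positive. Then for any δ ∈ (0,1), the condition 2^{−B/(L−1)} ≤ δ / ((L−1)(1+θ)(1 − 1/L + θ/P) + δ(1 + (L−1)θ)) with K = L implies f(B) ≤ δ. In particular B = (L−1)log₂(1/δ) + (L−1)log₂(L(1+Lθ)(1+θ/P)) suffices. -/
/-- Feedback requirement (proof of Lemma 5): with `q = 2^{−B/(L−1)}` and `K = L`,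
if `q ≤ δ/((L−1)(1+θ)(1−1/L+θ/P) + δ(1+(L−1)θ))` then the loss factor
`f(B) = q(1−1/L)(1+θ)(K−1+θK/P)/(1 − q(1+(K−1)θ))` is at most `δ`; in particular
`B = (L−1)log₂(1/δ) + (L−1)log₂(L(1+Lθ)(1+θ/P))` suffices. -/
theorem stmt19 (L K : ℕ) (hL : 2 ≤ L) (hK1 : 1 ≤ K) (hKL : K ≤ L) (hKeqL : K = L)
    (B θ P δ : ℝ) (hB : 0 ≤ B) (hθ : 0 < θ) (hP : 0 < P) (hδ : δ ∈ Set.Ioo (0 : ℝ) 1)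
    (hden : 0 < 1 - (2 : ℝ) ^ (-(B / ((L : ℝ) - 1))) * (1 + ((K : ℝ) - 1) * θ)) :
    ((2 : ℝ) ^ (-(B / ((L : ℝ) - 1))) ≤
        δ / (((L : ℝ) - 1) * (1 + θ) * (1 - 1 / (L : ℝ) + θ / P) + δ * (1 + ((L : ℝ) - 1) * θ)) →
      (2 : ℝ) ^ (-(B / ((L : ℝ) - 1))) * (1 - 1 / (L : ℝ)) * (1 + θ) *
          ((K : ℝ) - 1 + θ * (K : ℝ) / P) /
          (1 - (2 : ℝ) ^ (-(B / ((L : ℝ) - 1))) * (1 + ((K : ℝ) - 1) * θ)) ≤ δ)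
    ∧ (B = ((L : ℝ) - 1) * Real.logb 2 (1 / δ)
          + ((L : ℝ) - 1) * Real.logb 2 ((L : ℝ) * (1 + (L : ℝ) * θ) * (1 + θ / P)) →
      (2 : ℝ) ^ (-(B / ((L : ℝ) - 1))) * (1 - 1 / (L : ℝ)) * (1 + θ) *
          ((K : ℝ) - 1 + θ * (K : ℝ) / P) /
          (1 - (2 : ℝ) ^ (-(B / ((L : ℝ) - 1))) * (1 + ((K : ℝ) - 1) * θ)) ≤ δ) := by
  subst hKeqL
  obtain ⟨hδ0, hδ1⟩ := hδ
  have hL2 : (2 : ℝ) ≤ (K : ℝ) := by exact_mod_cast hL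
  have hL0 : (0 : ℝ) < (K : ℝ) := by linarith
  have hLne : (K : ℝ) ≠ 0 := ne_of_gt hL0
  set q : ℝ := (2 : ℝ) ^ (-(B / ((K : ℝ) - 1))) with hq
  have hq0 : 0 < q := Real.rpow_pos_of_pos (by norm_num) _
  set N : ℝ := ((K : ℝ) - 1) * (1 + θ) * (1 - 1 / (K : ℝ) + θ / P) with hN
  set M : ℝ := 1 + ((K : ℝ) - 1) * θ with hM
  have hinvL : 1 / (K : ℝ) ≤ 1 / 2 := by
    apply one_div_le_one_div_of_le <;> linarith
  have hθP : 0 < θ / P := div_pos hθ hP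
  have hNpos : 0 < N := by
    apply mul_pos (mul_pos (by linarith) (by linarith)) (by linarith)
  have hMpos : 0 < M := by
    have : 0 < ((K : ℝ) - 1) * θ := mul_pos (by linarith) hθ
    simp only [hM]; linarith
  have hAN : (1 - 1 / (K : ℝ)) * (1 + θ) * ((K : ℝ) - 1 + θ * (K : ℝ) / P) = N := by
    rw [hN]; field_simp
  have main : q ≤ δ / (N + δ * M) →
      q * (1 - 1 / (K : ℝ)) * (1 + θ) * ((K : ℝ) - 1 + θ * (K : ℝ) / P) / (1 - q * M) ≤ δ := by
    intro h
    have hDpos : 0 < N + δ * M := by positivity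
    have h1 : q * (N + δ * M) ≤ δ := (le_div_iff₀ hDpos).mp h
    rw [div_le_iff₀ hden]
    have h2 : q * (1 - 1 / (K : ℝ)) * (1 + θ) * ((K : ℝ) - 1 + θ * (K : ℝ) / P) = q * N := by
      rw [← hAN]; ring
    rw [h2]
    nlinarith [h1]
  refine ⟨main, fun hBeq => main ?_⟩
  set C : ℝ := (K : ℝ) * (1 + (K : ℝ) * θ) * (1 + θ / P) with hC
  have hCpos : 0 < C := by positivity
  have hL1ne : (K : ℝ) - 1 ≠ 0 := by intro h; nlinarith
  have hqeq : q = δ / C := by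
    have hdc : 0 < δ / C := div_pos hδ0 hCpos
    have hexp : -(B / ((K : ℝ) - 1)) = Real.logb 2 (δ / C) := by
      rw [hBeq]
      have h1 : Real.logb 2 (1 / δ) = - Real.logb 2 δ := by
        rw [one_div, Real.logb_inv]
      have h2 : Real.logb 2 (δ / C) = Real.logb 2 δ - Real.logb 2 C :=
        Real.logb_div (ne_of_gt hδ0) (ne_of_gt hCpos)
      rw [h1, h2]
      field_simp
      ring
    rw [hq, hexp, Real.rpow_logb (by norm_num) (by norm_num) hdc]
  rw [hqeq]
  have hDpos : 0 < N + δ * M := by positivity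
  have hKP : (0 : ℝ) < (K : ℝ) * P := by positivity
  have e1 : N * ((K : ℝ) * P) = (1 + θ) * (((K : ℝ) - 1) ^ 2 * P + (K : ℝ) * θ * ((K : ℝ) - 1)) := by
    rw [hN]; field_simp
  have e2 : C * ((K : ℝ) * P) = (K : ℝ) ^ 2 * (1 + (K : ℝ) * θ) * (P + θ) := by
    rw [hC]; field_simp
  have hKm2 : (0:ℝ) ≤ (K:ℝ) - 2 := by linarith
  have h22 := mul_nonneg (sq_nonneg (K:ℝ)) hKm2
  have hc1 : (0:ℝ) ≤ (K:ℝ)^3 - 2*(K:ℝ)^2 + 3*(K:ℝ) - 1 := by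
    have e : (K:ℝ)^3 - 2*(K:ℝ)^2 + 3*(K:ℝ) - 1 = (K:ℝ)^2*((K:ℝ)-2) + (3*(K:ℝ)-1) := by ring
    rw [e]
    have : (0:ℝ) ≤ 3*(K:ℝ)-1 := by linarith
    linarith [h22, this]
  have hc2 : (0:ℝ) ≤ (K:ℝ)^3 - (K:ℝ)^2 + (K:ℝ) := by
    have e : (K:ℝ)^3 - (K:ℝ)^2 + (K:ℝ) = (K:ℝ)^2*((K:ℝ)-2) + ((K:ℝ)^2 + (K:ℝ)) := by ring
    rw [e]
    have h23 : (0:ℝ) ≤ (K:ℝ)^2 + (K:ℝ) := by positivity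
    linarith [h22, h23]
  have poly : N * ((K : ℝ) * P) + M * ((K : ℝ) * P) ≤ C * ((K : ℝ) * P) := by
    rw [e1, e2, hM]
    rw [← sub_nonneg]
    have hid : (K:ℝ)^2*(1+(K:ℝ)*θ)*(P+θ)
        - ((1 + θ) * (((K : ℝ) - 1) ^ 2 * P + (K : ℝ) * θ * ((K : ℝ) - 1))
          + (1+((K:ℝ)-1)*θ)*((K:ℝ)*P))
        = P*((K:ℝ)-1) + P*θ*((K:ℝ)^3-2*(K:ℝ)^2+3*(K:ℝ)-1) + θ*(K:ℝ)
          + θ^2*((K:ℝ)^3-(K:ℝ)^2+(K:ℝ)) := by ring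
    rw [hid]
    have t1 : (0:ℝ) ≤ P*((K:ℝ)-1) := mul_nonneg hP.le (by linarith)
    have t2 : (0:ℝ) ≤ P*θ*((K:ℝ)^3-2*(K:ℝ)^2+3*(K:ℝ)-1) :=
      mul_nonneg (mul_nonneg hP.le hθ.le) hc1
    have t3 : (0:ℝ) ≤ θ*(K:ℝ) := mul_nonneg hθ.le hL0.le
    have t4 : (0:ℝ) ≤ θ^2*((K:ℝ)^3-(K:ℝ)^2+(K:ℝ)) := mul_nonneg (sq_nonneg θ) hc2
    linarith [t1, t2, t3, t4]
  have hNMC : N + M ≤ C := by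
    have h3 : (N + M) * ((K : ℝ) * P) ≤ C * ((K : ℝ) * P) := by
      have : (N + M) * ((K : ℝ) * P) = N * ((K : ℝ) * P) + M * ((K : ℝ) * P) := by ring
      linarith [poly, this]
    exact le_of_mul_le_mul_right h3 hKP
  have hDC : N + δ * M ≤ C := by
    have hdm : δ * M ≤ 1 * M := mul_le_mul_of_nonneg_right (le_of_lt hδ1) hMpos.le
    rw [one_mul] at hdm
    linarith [hNMC, hdm]
  exact div_le_div_of_nonneg_left (le_of_lt hδ0) hDpos hDC
end
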